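/- Let ω : ℝ → ℝ and let x, y : ℝ → ℝ be twice differentiable with y(t) ≠ 0, satisfying x'' = -ω(t)²x and y'' = -ω(t)²y + 1/y³. Then the Lewis invariant I₀ = (1/2)(xy' - yx')² + (1/2)(x/y)² is constant in t. -/

import Mathlib

/-- The Lewis invariant of the time-dependent oscillator with the Pinney
auxiliary equation is constant. -/
theorem lewis_invariant_constant
    (ω x y x' y' : ℝ → ℝ)
    (hy0 : ∀ t, y t ≠ 0)
    (hx : ∀ t, HasDerivAt x (x' t) t)
    (hy : ∀ t, HasDerivAt y (y' t) t)
    (hx' : ∀ t, HasDerivAt x' (-(ω t)^2 * x t) t)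
    (hy' : ∀ t, HasDerivAt y' (-(ω t)^2 * y t + 1 / (y t)^3) t) :
    ∀ t, deriv (fun s => (1/2) * (x s * y' s - y s * x' s)^2
      + (1/2) * (x s / y s)^2) t = 0 := by
  intro t
  have hW : HasDerivAt (fun s => x s * y' s - y s * x' s)
      (x' t * y' t + x t * (-(ω t)^2 * y t + 1 / (y t)^3)
        - (y' t * x' t + y t * (-(ω t)^2 * x t))) t :=
    ((hx t).mul (hy' t)).sub ((hy t).mul (hx' t))
  have h1 : HasDerivAt (fun s => (1/2 : ℝ) * (x s * y' s - y s * x' s)^2)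
      ((1/2) * (2 * (x t * y' t - y t * x' t) *
        (x' t * y' t + x t * (-(ω t)^2 * y t + 1 / (y t)^3)
        - (y' t * x' t + y t * (-(ω t)^2 * x t))))) t := by
    simpa using ((hW.pow 2).const_mul (1/2 : ℝ))
  have hq : HasDerivAt (fun s => x s / y s)
      ((x' t * y t - x t * y' t) / (y t)^2) t := (hx t).div (hy t) (hy0 t)
  have h2 : HasDerivAt (fun s => (1/2 : ℝ) * (x s / y s)^2)
      ((1/2) * (2 * (x t / y t) * ((x' t * y t - x t * y' t) / (y t)^2))) t := by
    simpa using ((hq.pow 2).const_mul (1/2 : ℝ))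
  have h := (h1.fun_add h2).deriv
  rw [h]
  have hyt := hy0 t
  field_simp
  ring
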